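/- Let q > 0 be real and p(t) = q^2 t^4 − q t^3 + q t^2 − t + 1. Then: (i) for every q > 0, p has at least two non-real complex-conjugate roots of modulus q^{-1/2}; (ii) if 0 < q < 4/9, then p has exactly two real roots, both positive, with product 1/q; (iii) if q > 4/9, then all four roots of p are non-real and have modulus q^{-1/2}. -/

import Mathlib

private lemma quad_no_real' (q c t : ℝ) (hq : 0 < q) (hd : c^2 - 4*q < 0) :
    q * t^2 + c * t + 1 ≠ 0 := by
  intro h
  nlinarith [sq_nonneg (2*q*t + c)]

private lemma quad_complex_root' (q c : ℝ) (hq : 0 < q) (hd : c^2 - 4*q < 0) (z : ℂ)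
    (hz : (q:ℂ) * z^2 + (c:ℂ) * z + 1 = 0) :
    z.im ≠ 0 ∧ Complex.normSq z = 1/q := by
  obtain ⟨a, b⟩ := z
  have h1 := congrArg Complex.re hz
  have h2 := congrArg Complex.im hz
  simp [pow_two, Complex.add_re, Complex.add_im, Complex.mul_re, Complex.mul_im] at h1 h2
  have hb : b ≠ 0 := by
    intro h0
    rw [h0] at h1
    nlinarith [sq_nonneg (2*q*a + c)]
  have h3 : b * (2*q*a + c) = 0 := by linear_combination h2
  have h4 : 2*q*a + c = 0 := by
    rcases mul_eq_zero.mp h3 with h | h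
    · exact absurd h hb
    · exact h
  refine ⟨hb, ?_⟩
  simp only [Complex.normSq_mk]
  field_simp
  linear_combination a*h4 - h1

private lemma quad_complex_root_ex' (q c : ℝ) (hq : 0 < q) (hd : c^2 - 4*q < 0) :
    ∃ z : ℂ, z.im ≠ 0 ∧ (q:ℂ) * z^2 + (c:ℂ) * z + 1 = 0 := by
  have hpos : 0 < 4*q - c^2 := by linarith
  obtain ⟨r, hs, hs0⟩ : ∃ r:ℝ, r^2 = 4*q - c^2 ∧ 0 < r :=
    ⟨Real.sqrt (4*q - c^2), Real.sq_sqrt hpos.le, Real.sqrt_pos.mpr hpos⟩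
  refine ⟨⟨-c/(2*q), r/(2*q)⟩, ?_, ?_⟩
  · show r/(2*q) ≠ 0
    positivity
  · apply Complex.ext <;>
      simp only [pow_two, Complex.mul_re, Complex.mul_im, Complex.add_re, Complex.add_im,
        Complex.ofReal_re, Complex.ofReal_im, Complex.one_re, Complex.one_im,
        Complex.zero_re, Complex.zero_im] <;>
      field_simp <;>
      first
        | linear_combination (2*q^2)*hs
        | linear_combination (-2*q^2)*hs
        | linear_combination (-q)*hs
        | ring

private lemma abs_eq_rpow' (q : ℝ) (hq : 0 < q) (z : ℂ) (h : Complex.normSq z = 1/q) :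
    ‖z‖ = q ^ (-(1/2) : ℝ) := by
  rw [Complex.norm_def, h, Real.rpow_neg hq.le, ← Real.sqrt_eq_rpow, one_div, Real.sqrt_inv]

/-- Root structure of `p(t) = q²t⁴ − qt³ + qt² − t + 1` (the `a = 0` superpolynomial
of the link `2T(2,1)` after `q ↦ qt`) for real `q > 0`:
(i) there is always a conjugate pair of non-real roots of modulus `q^{-1/2}`;
(ii) for `0 < q < 4/9` exactly two real roots, positive, with product `1/q`;
(iii) for `q > 4/9` all four roots are non-real of modulus `q^{-1/2}`. -/
theorem stmt4 (q : ℝ) (hq : 0 < q) :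
    (∃ z : ℂ, z.im ≠ 0 ∧
      (q : ℂ) ^ 2 * z ^ 4 - (q : ℂ) * z ^ 3 + (q : ℂ) * z ^ 2 - z + 1 = 0 ∧
      (q : ℂ) ^ 2 * (starRingEnd ℂ z) ^ 4 - (q : ℂ) * (starRingEnd ℂ z) ^ 3 +
        (q : ℂ) * (starRingEnd ℂ z) ^ 2 - starRingEnd ℂ z + 1 = 0 ∧
      ‖z‖ = q ^ (-(1 / 2) : ℝ)) ∧
    (q < 4 / 9 → ∃ t₁ t₂ : ℝ, t₁ ≠ t₂ ∧ 0 < t₁ ∧ 0 < t₂ ∧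
      q ^ 2 * t₁ ^ 4 - q * t₁ ^ 3 + q * t₁ ^ 2 - t₁ + 1 = 0 ∧
      q ^ 2 * t₂ ^ 4 - q * t₂ ^ 3 + q * t₂ ^ 2 - t₂ + 1 = 0 ∧
      t₁ * t₂ = 1 / q ∧
      ∀ t : ℝ, q ^ 2 * t ^ 4 - q * t ^ 3 + q * t ^ 2 - t + 1 = 0 → t = t₁ ∨ t = t₂) ∧
    (4 / 9 < q → ∀ z : ℂ,
      (q : ℂ) ^ 2 * z ^ 4 - (q : ℂ) * z ^ 3 + (q : ℂ) * z ^ 2 - z + 1 = 0 →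
      z.im ≠ 0 ∧ ‖z‖ = q ^ (-(1 / 2) : ℝ)) := by
  have hq4 : (0:ℝ) < 1 + 4*q := by linarith
  obtain ⟨s, hs, hs0⟩ : ∃ s:ℝ, s^2 = 1 + 4*q ∧ 0 ≤ s :=
    ⟨Real.sqrt (1 + 4*q), Real.sq_sqrt hq4.le, Real.sqrt_nonneg _⟩
  have hs1 : 1 < s := by nlinarith
  obtain ⟨α, hα⟩ : ∃ x:ℝ, x = -(1+s)/2 := ⟨_, rfl⟩
  obtain ⟨β, hβ⟩ : ∃ x:ℝ, x = (s-1)/2 := ⟨_, rfl⟩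
  have hsum : α + β = -1 := by rw [hα, hβ]; ring
  have hprod : α * β = -q := by rw [hα, hβ]; linear_combination (-1/4) * hs
  have hdβ : β^2 - 4*q < 0 := by rw [hβ]; nlinarith
  have hfacR : ∀ t : ℝ, q^2*t^4 - q*t^3 + q*t^2 - t + 1
      = (q*t^2 + α*t + 1)*(q*t^2 + β*t + 1) := by
    intro t
    linear_combination (-(q*t^3) - t)*hsum + (-(t^2))*hprod
  have hsumC : (α:ℂ) + (β:ℂ) = -1 := by exact_mod_cast hsum
  have hprodC : (α:ℂ) * (β:ℂ) = -(q:ℂ) := by exact_mod_cast hprod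
  have hfacC : ∀ z : ℂ, (q:ℂ)^2*z^4 - (q:ℂ)*z^3 + (q:ℂ)*z^2 - z + 1
      = ((q:ℂ)*z^2 + (α:ℂ)*z + 1)*((q:ℂ)*z^2 + (β:ℂ)*z + 1) := by
    intro z
    linear_combination (-((q:ℂ)*z^3) - z)*hsumC + (-(z^2))*hprodC
  refine ⟨?_, ?_, ?_⟩
  · -- part (i)
    obtain ⟨z, hzim, hz⟩ := quad_complex_root_ex' q β hq hdβ
    have hz4 : (q:ℂ)^2*z^4 - (q:ℂ)*z^3 + (q:ℂ)*z^2 - z + 1 = 0 := by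
      rw [hfacC z, hz, mul_zero]
    refine ⟨z, hzim, hz4, ?_, ?_⟩
    · have := congrArg (starRingEnd ℂ) hz4
      simpa using this
    · exact abs_eq_rpow' q hq z (quad_complex_root' q β hq hdβ z hz).2
  · -- part (ii)
    intro h49
    have hdα : 0 < α^2 - 4*q := by rw [hα]; nlinarith
    obtain ⟨e, he, he0⟩ : ∃ e:ℝ, e^2 = α^2 - 4*q ∧ 0 < e :=
      ⟨Real.sqrt (α^2 - 4*q), Real.sq_sqrt hdα.le, Real.sqrt_pos.mpr hdα⟩
    have hnα : 0 < -α := by rw [hα]; linarith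
    have heα : e < -α := by nlinarith
    have hq2 : (2*q) ≠ 0 := by positivity
    have ht1 : q*((-α + e)/(2*q))^2 + α*((-α + e)/(2*q)) + 1 = 0 := by
      field_simp
      linear_combination he
    have ht2 : q*((-α - e)/(2*q))^2 + α*((-α - e)/(2*q)) + 1 = 0 := by
      field_simp
      linear_combination he
    refine ⟨(-α + e)/(2*q), (-α - e)/(2*q), ?_,
      div_pos (by linarith) (by linarith), div_pos (by linarith) (by linarith),
      ?_, ?_, ?_, ?_⟩
    · intro h
      rw [div_eq_div_iff (by positivity) (by positivity)] at h
      nlinarith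
    · rw [hfacR, ht1, zero_mul]
    · rw [hfacR, ht2, zero_mul]
    · field_simp
      linear_combination (-1)*he
    · intro t ht
      rw [hfacR t] at ht
      rcases mul_eq_zero.mp ht with h | h
      · have key : q*(t - (-α + e)/(2*q))*(t - (-α - e)/(2*q)) = 0 := by
          rw [← h]
          field_simp
          linear_combination (-1)*he
        rcases mul_eq_zero.mp key with h' | h'
        · rcases mul_eq_zero.mp h' with h'' | h''
          · exact absurd h'' (by positivity)
          · left; linarith [sub_eq_zero.mp h'']
        · right; linarith [sub_eq_zero.mp h']
      · exact absurd h (quad_no_real' q β t hq hdβ)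
  · -- part (iii)
    intro h49 z hz
    rw [hfacC z] at hz
    have hdα : α^2 - 4*q < 0 := by rw [hα]; nlinarith
    rcases mul_eq_zero.mp hz with h | h
    · obtain ⟨h1, h2⟩ := quad_complex_root' q α hq hdα z h
      exact ⟨h1, abs_eq_rpow' q hq z h2⟩
    · obtain ⟨h1, h2⟩ := quad_complex_root' q β hq hdβ z h
      exact ⟨h1, abs_eq_rpow' q hq z h2⟩
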